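/- Let f be a real number with −1/2 < f < 0 and set y* = −f/(1+f), so 0 < y* < 1. Then for every integer n ≥ 2 and every real r with 0 < r < min(y*, 1−y*), the circle integral ∮_{|y−y*|=r} θ(y)·Ψ̂_n(y;f) dy equals 0. Equivalently, for every n ≥ 2 the residue of θ(y)Ψ_n(y;f) at the ramification point y = −f/(1+f) is 0. -/

import Mathlib

open Complex

/-- The functions `Ψ̂_n(·;f)`, defined recursively by
`Ψ̂_0(y;f) = -1/(f+(f+1)y)^2` and
`Ψ̂_n(y;f) = -(d/dy)[Ψ̂_{n-1}(y;f) · y(y+1)/(f+(f+1)y)]`. -/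
noncomputable def PsiHat (f : ℂ) : ℕ → ℂ → ℂ
  | 0 => fun y => -1 / (f + (f + 1) * y) ^ 2
  | n + 1 => fun y =>
      -deriv (fun w => PsiHat f n w * (w * (w + 1) / (f + (f + 1) * w))) y

/-- The primitive `θ(y) = (f/2)(log y)^2 + (log y)·log(1+y) + Li₂(-y)`,
with `log` the principal branch and `Li₂(w) = ∑_{k≥1} w^k/k^2`. -/
noncomputable def theta (f : ℂ) (y : ℂ) : ℂ :=
  f / 2 * Complex.log y ^ 2 + Complex.log y * Complex.log (1 + y) +
    ∑' k : ℕ, (-y) ^ (k + 1) / ((k : ℂ) + 1) ^ 2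

/-! ### Laurent-polynomial helper lemmas -/

lemma sum_zpow_shift (a : ℤ → ℂ) (lo hi s : ℤ) {u : ℂ} (hu : u ≠ 0) :
    (∑ k ∈ Finset.Icc lo hi, a k * u ^ k) * u ^ s
      = ∑ j ∈ Finset.Icc (lo + s) (hi + s), a (j - s) * u ^ j := by
  rw [show Finset.Icc (lo + s) (hi + s) = (Finset.Icc lo hi).map (addRightEmbedding s) by
    rw [Finset.map_add_right_Icc], Finset.sum_map, Finset.sum_mul]
  refine Finset.sum_congr rfl fun k _ => ?_
  simp only [addRightEmbedding_apply, add_sub_cancel_right]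
  rw [mul_assoc, ← zpow_add₀ hu]

lemma sum_zpow_extend (a : ℤ → ℂ) {lo hi lo' hi' : ℤ} (h1 : lo' ≤ lo) (h2 : hi ≤ hi')
    (ha : ∀ k, k ∉ Finset.Icc lo hi → a k = 0) (u : ℂ) :
    ∑ k ∈ Finset.Icc lo hi, a k * u ^ k = ∑ k ∈ Finset.Icc lo' hi', a k * u ^ k :=
  Finset.sum_subset (Finset.Icc_subset_Icc h1 h2) (fun k _ hk => by rw [ha k hk, zero_mul])

lemma hasDerivAt_LPsum (a : ℤ → ℂ) (s : Finset ℤ) (ρ y : ℂ) (hy : y ≠ ρ) :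
    HasDerivAt (fun w => ∑ k ∈ s, a k * (w - ρ) ^ k)
      (∑ k ∈ s, a k * ((k : ℂ) * (y - ρ) ^ (k - 1))) y := by
  refine HasDerivAt.fun_sum fun k _ => ?_
  have h1 : HasDerivAt (fun w : ℂ => w - ρ) 1 y := (hasDerivAt_id y).sub_const ρ
  have h2 := (hasDerivAt_zpow k (y - ρ) (Or.inl (sub_ne_zero.2 hy))).comp y h1
  simpa using h2.const_mul (a k)

lemma LP_mul (a : ℤ → ℂ) (lo hi : ℤ) (ha : ∀ k, k ∉ Finset.Icc lo hi → a k = 0)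
    (α β γ : ℂ) {u : ℂ} (hu : u ≠ 0) :
    (∑ k ∈ Finset.Icc lo hi, a k * u ^ k) * (α * u + β + γ * u⁻¹)
      = ∑ j ∈ Finset.Icc (lo - 1) (hi + 1),
          (α * a (j - 1) + β * a j + γ * a (j + 1)) * u ^ j := by
  have e1 : (∑ k ∈ Finset.Icc lo hi, a k * u ^ k) * (α * u + β + γ * u⁻¹)
      = ((∑ k ∈ Finset.Icc lo hi, (α * a k) * u ^ k) * u ^ (1 : ℤ))
        + (∑ k ∈ Finset.Icc lo hi, (β * a k) * u ^ k)
        + ((∑ k ∈ Finset.Icc lo hi, (γ * a k) * u ^ k) * u ^ (-1 : ℤ)) := by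
    rw [zpow_one, zpow_neg_one, Finset.sum_mul, Finset.sum_mul, Finset.sum_mul,
      ← Finset.sum_add_distrib, ← Finset.sum_add_distrib]
    exact Finset.sum_congr rfl fun k _ => by ring
  rw [e1, sum_zpow_shift _ _ _ _ hu, sum_zpow_shift _ _ _ _ hu]
  simp only [sub_neg_eq_add, ← sub_eq_add_neg]
  rw [sum_zpow_extend (fun j => α * a (j - 1)) (by omega : lo - 1 ≤ lo + 1)
      (by omega : hi + 1 ≤ hi + 1)
      (fun k hk => show α * a (k - 1) = 0 by
        rw [ha (k - 1) (by simp at hk ⊢; omega), mul_zero]) u]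
  rw [sum_zpow_extend (fun j => β * a j) (by omega : lo - 1 ≤ lo)
      (by omega : hi ≤ hi + 1)
      (fun k hk => show β * a k = 0 by rw [ha k hk, mul_zero]) u]
  rw [sum_zpow_extend (fun j => γ * a (j + 1)) (by omega : lo - 1 ≤ lo - 1)
      (by omega : hi - 1 ≤ hi + 1)
      (fun k hk => show γ * a (k + 1) = 0 by
        rw [ha (k + 1) (by simp at hk ⊢; omega), mul_zero]) u]
  rw [← Finset.sum_add_distrib, ← Finset.sum_add_distrib]
  exact Finset.sum_congr rfl fun j _ => by ring

/-! ### Structure of `PsiHat` as a Laurent polynomial at the ramification point -/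

lemma L_eq (f : ℂ) (hc : f + 1 ≠ 0) (y : ℂ) :
    f + (f + 1) * y = (f + 1) * (y - (-f / (f + 1))) := by
  field_simp
  ring

lemma q_eq (f : ℂ) (hc : f + 1 ≠ 0) {y : ℂ} (hy : y ≠ -f / (f + 1)) :
    y * (y + 1) / (f + (f + 1) * y)
      = (f + 1)⁻¹ * (y - (-f / (f + 1)))
        + (2 * (-f / (f + 1)) + 1) * (f + 1)⁻¹
        + ((-f / (f + 1)) * ((-f / (f + 1)) + 1) * (f + 1)⁻¹) * (y - (-f / (f + 1)))⁻¹ := by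
  have hu : y - (-f / (f + 1)) ≠ 0 := sub_ne_zero.2 hy
  rw [L_eq f hc]
  generalize -f / (f + 1) = p at hu ⊢
  field_simp
  ring

lemma rep_mul_q (f : ℂ) (hc : f + 1 ≠ 0) (g : ℂ → ℂ) (lo : ℤ) (a : ℤ → ℂ)
    (hsupp : ∀ k, k ∉ Finset.Icc lo (-2) → a k = 0)
    (heq : ∀ y : ℂ, y ≠ -f / (f + 1) →
      g y = ∑ k ∈ Finset.Icc lo (-2), a k * (y - (-f / (f + 1))) ^ k) :
    ∃ b : ℤ → ℂ, (∀ j, j ∉ Finset.Icc (lo - 1) (-1) → b j = 0) ∧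
      ∀ y : ℂ, y ≠ -f / (f + 1) →
        g y * (y * (y + 1) / (f + (f + 1) * y))
          = ∑ j ∈ Finset.Icc (lo - 1) (-1), b j * (y - (-f / (f + 1))) ^ j := by
  set ρ := -f / (f + 1)
  refine ⟨fun j => (f + 1)⁻¹ * a (j - 1) + ((2 * ρ + 1) * (f + 1)⁻¹) * a j
      + (ρ * (ρ + 1) * (f + 1)⁻¹) * a (j + 1), fun j hj => ?_, fun y hy => ?_⟩
  · beta_reduce
    rw [hsupp (j - 1) (by simp at hj ⊢; omega), hsupp j (by simp at hj ⊢; omega),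
      hsupp (j + 1) (by simp at hj ⊢; omega)]
    ring
  · have hu : y - ρ ≠ 0 := sub_ne_zero.2 hy
    rw [heq y hy, q_eq f hc hy, LP_mul a lo (-2) hsupp _ _ _ hu]
    norm_num; rfl

lemma rep_deriv (f : ℂ) (g : ℂ → ℂ) (lo hi : ℤ) (b : ℤ → ℂ)
    (heq : ∀ y : ℂ, y ≠ -f / (f + 1) →
      g y = ∑ j ∈ Finset.Icc lo hi, b j * (y - (-f / (f + 1))) ^ j)
    {y : ℂ} (hy : y ≠ -f / (f + 1)) :
    HasDerivAt g (∑ j ∈ Finset.Icc lo hi, b j * ((j : ℂ) * (y - (-f / (f + 1))) ^ (j - 1))) y := by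
  refine (hasDerivAt_LPsum b _ _ _ hy).congr_of_eventuallyEq ?_
  filter_upwards [isOpen_ne.mem_nhds hy] with w hw
  exact heq w hw

lemma deriv_sum_eq (b : ℤ → ℂ) (lo hi : ℤ) {u : ℂ} (hu : u ≠ 0) :
    ∑ j ∈ Finset.Icc lo hi, b j * ((j : ℂ) * u ^ (j - 1))
      = ∑ j ∈ Finset.Icc (lo - 1) (hi - 1), (b (j + 1) * ((j : ℂ) + 1)) * u ^ j := by
  have e1 : ∑ j ∈ Finset.Icc lo hi, b j * ((j : ℂ) * u ^ (j - 1))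
      = (∑ j ∈ Finset.Icc lo hi, (b j * (j : ℂ)) * u ^ j) * u ^ (-1 : ℤ) := by
    rw [Finset.sum_mul]
    refine Finset.sum_congr rfl fun j _ => ?_
    rw [show j - 1 = j + (-1) by ring, zpow_add₀ hu]
    ring
  rw [e1, sum_zpow_shift _ _ _ _ hu]
  simp only [sub_neg_eq_add, ← sub_eq_add_neg]
  refine Finset.sum_congr rfl fun j _ => ?_
  push_cast
  ring

lemma psiHat_rep (f : ℂ) (hc : f + 1 ≠ 0) (n : ℕ) :
    ∃ a : ℤ → ℂ,
      (∀ k, k ∉ Finset.Icc (-2 * (n : ℤ) - 2) (-2) → a k = 0) ∧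
      ∀ y : ℂ, y ≠ -f / (f + 1) →
        PsiHat f n y
          = ∑ k ∈ Finset.Icc (-2 * (n : ℤ) - 2) (-2), a k * (y - (-f / (f + 1))) ^ k := by
  set ρ := -f / (f + 1) with hρ
  induction n with
  | zero =>
    refine ⟨fun k => if k = -2 then -(((f + 1) ^ 2)⁻¹) else 0, fun k hk => ?_, fun y hy => ?_⟩
    · beta_reduce
      simp only [Nat.cast_zero] at hk
      rw [if_neg]; intro h; subst h; simp at hk
    · have hu : y - ρ ≠ 0 := sub_ne_zero.2 hy
      have : (-2 * ((0 : ℕ) : ℤ) - 2) = -2 := by norm_num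
      rw [this, show Finset.Icc (-2 : ℤ) (-2) = {-2} by rw [Finset.Icc_self],
        Finset.sum_singleton]
      beta_reduce
      rw [if_pos rfl]
      show -1 / (f + (f + 1) * y) ^ 2 = _
      rw [L_eq f hc y, ← hρ]
      rw [show ((-2 : ℤ)) = -(2 : ℤ) by ring, zpow_neg]
      rw [show ((2:ℤ) = ((2:ℕ):ℤ)) by norm_num, zpow_natCast]
      field_simp
  | succ n ih =>
    obtain ⟨a, hsupp, heq⟩ := ih
    obtain ⟨b, hbsupp, hbeq⟩ := rep_mul_q f hc (PsiHat f n) _ a hsupp heq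
    set lo : ℤ := -2 * (n : ℤ) - 2
    refine ⟨fun k => -(b (k + 1) * ((k : ℂ) + 1)), fun k hk => ?_, fun y hy => ?_⟩
    · beta_reduce
      by_cases h : k = -1
      · subst h; norm_num
      · rw [hbsupp (k + 1) (by simp at hk ⊢; omega)]
        ring
    · have hu : y - ρ ≠ 0 := sub_ne_zero.2 hy
      have hD := rep_deriv f _ _ _ b hbeq hy
      show -deriv (fun w => PsiHat f n w * (w * (w + 1) / (f + (f + 1) * w))) y = _
      rw [hD.deriv, deriv_sum_eq b _ _ hu, ← Finset.sum_neg_distrib]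
      rw [show lo - 1 - 1 = -2 * ((n : ℤ) + 1) - 2 by omega,
        show (-1 : ℤ) - 1 = -2 by norm_num]
      refine Finset.sum_congr (by push_cast; ring_nf) fun j _ => by ring

/-- `PsiHat f (k+1) y` is (minus) the derivative of the previous `G`-function. -/
lemma hasDerivAt_G (f : ℂ) (hc : f + 1 ≠ 0) (k : ℕ) {y : ℂ} (hy : y ≠ -f / (f + 1)) :
    HasDerivAt (fun w => PsiHat f k w * (w * (w + 1) / (f + (f + 1) * w)))
      (-(PsiHat f (k + 1) y)) y := by
  obtain ⟨a, hsupp, heq⟩ := psiHat_rep f hc k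
  obtain ⟨b, hbsupp, hbeq⟩ := rep_mul_q f hc (PsiHat f k) _ a hsupp heq
  have hD := rep_deriv f _ _ _ b hbeq hy
  have hval : PsiHat f (k + 1) y
      = -deriv (fun w => PsiHat f k w * (w * (w + 1) / (f + (f + 1) * w))) y := rfl
  rw [hval, hD.deriv, neg_neg]
  exact hD

/-! ### Derivative of `theta` -/

set_option maxHeartbeats 1000000 in
lemma hasDerivAt_li2 {y : ℂ} (hy0 : y ≠ 0) (hnorm : ‖y‖ < 1) :
    HasDerivAt (fun w : ℂ => ∑' k : ℕ, (-w) ^ (k + 1) / ((k : ℂ) + 1) ^ 2)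
      (-Complex.log (1 + y) / y) y := by
  set R : ℝ := (1 + ‖y‖) / 2 with hR
  have hR1 : R < 1 := by rw [hR]; linarith
  have hR0 : 0 < R := by rw [hR]; positivity
  have hyR : ‖y‖ < R := by rw [hR]; linarith
  have key : HasDerivAt (fun w : ℂ => ∑' k : ℕ, (-w) ^ (k + 1) / ((k : ℂ) + 1) ^ 2)
      (∑' k : ℕ, -((-y) ^ k) / ((k : ℂ) + 1)) y := by
    refine hasDerivAt_tsum_of_isPreconnected
      (u := fun k : ℕ => R ^ k)
      (g := fun (k : ℕ) (w : ℂ) => (-w) ^ (k + 1) / ((k : ℂ) + 1) ^ 2)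
      (g' := fun (k : ℕ) (w : ℂ) => -((-w) ^ k) / ((k : ℂ) + 1))
      (summable_geometric_of_lt_one hR0.le hR1) (Metric.isOpen_ball)
      ((convex_ball (0:ℂ) R).isPreconnected) (fun k w _ => ?_) (fun k w hw => ?_)
      (Metric.mem_ball_self hR0) ?_ (by simpa [Metric.mem_ball, dist_eq_norm] using hyR)
    · have hk : ((k : ℂ) + 1) ≠ 0 := Nat.cast_add_one_ne_zero k
      have h := ((hasDerivAt_pow (k + 1) (-w)).comp w ((hasDerivAt_id w).neg)).div_const
        (((k : ℂ) + 1) ^ 2)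
      convert h using 1 <;> try rfl
      push_cast
      field_simp
    · have hw' : ‖w‖ < R := by simpa [Metric.mem_ball, dist_eq_norm] using hw
      have h1 : (1:ℝ) ≤ ‖((k : ℂ) + 1)‖ := by
        rw [show ((k : ℂ) + 1) = ((k + 1 : ℕ) : ℂ) by push_cast; ring, Complex.norm_natCast]
        exact_mod_cast Nat.one_le_iff_ne_zero.2 (Nat.succ_ne_zero k)
      calc ‖-((-w) ^ k) / ((k : ℂ) + 1)‖ = ‖w‖ ^ k / ‖((k : ℂ) + 1)‖ := by
            rw [norm_div, norm_neg, norm_pow, norm_neg]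
        _ ≤ ‖w‖ ^ k / 1 := by gcongr
        _ = ‖w‖ ^ k := div_one _
        _ ≤ R ^ k := by gcongr
    · refine Summable.congr summable_zero fun k => ?_
      simp
  have hsum : HasSum (fun k : ℕ => (-y) ^ (k + 1) / ((k : ℂ) + 1)) (-Complex.log (1 + y)) := by
    have H := Complex.hasSum_taylorSeries_neg_log (z := -y) (by simpa using hnorm)
    have := (hasSum_nat_add_iff (f := fun n : ℕ => (-y) ^ n / (n : ℂ))
        (g := -Complex.log (1 + y)) 1).2 ?_
    · convert this using 2 with k <;> try rfl
      push_cast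
      ring_nf
    · convert H using 1 <;> try rfl
      simp [sub_neg_eq_add]
  convert key using 1
  have : ∀ k : ℕ, -((-y) ^ k) / ((k : ℂ) + 1) = y⁻¹ * ((-y) ^ (k + 1) / ((k : ℂ) + 1)) := by
    intro k
    have hk : ((k : ℂ) + 1) ≠ 0 := Nat.cast_add_one_ne_zero k
    field_simp
    ring
  rw [tsum_congr this, tsum_mul_left, hsum.tsum_eq]
  field_simp

lemma hasDerivAt_theta (f : ℂ) {y : ℂ} (hre : 0 < y.re) (hnorm : ‖y‖ < 1) :
    HasDerivAt (theta f)
      (Complex.log y * (f + (f + 1) * y) / (y * (y + 1))) y := by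
  have hy0 : y ≠ 0 := fun h => by simp [h] at hre
  have hyslit : y ∈ slitPlane := Or.inl hre
  have h1yslit : (1 + y) ∈ slitPlane := Or.inl (by simp; linarith)
  have hy1 : y + 1 ≠ 0 := by
    intro h
    have : (y + 1).re = 0 := by rw [h]; simp
    simp at this; linarith
  have hA : HasDerivAt (fun w : ℂ => f / 2 * Complex.log w ^ 2)
      (f / 2 * ((2:ℕ) * Complex.log y ^ 1 * y⁻¹)) y :=
    ((Complex.hasDerivAt_log hyslit).pow 2).const_mul (f / 2)
  have hlog1y : HasDerivAt (fun w : ℂ => Complex.log (1 + w)) (1 + y)⁻¹ y := by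
    have := (Complex.hasDerivAt_log h1yslit).comp y ((hasDerivAt_id y).const_add 1)
    rw [mul_one] at this; exact this
  have hB := (Complex.hasDerivAt_log hyslit).mul hlog1y
  have hC := hasDerivAt_li2 hy0 hnorm
  have := (hA.add hB).add hC
  rw [show theta f = (fun y : ℂ => f / 2 * Complex.log y ^ 2 +
      Complex.log y * Complex.log (1 + y) +
      ∑' k : ℕ, (-y) ^ (k + 1) / ((k : ℂ) + 1) ^ 2) from rfl]
  convert this using 1 <;> try rfl
  have h1y0 : (1 : ℂ) + y ≠ 0 := by rwa [add_comm] at hy1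
  field_simp
  ring

/-! ### The main theorem -/

/-- Lemma 3.2, `n ≥ 2` case: the residue of `θ(y)Ψ_n(y;f)` at the ramification
point `y* = -f/(1+f)` vanishes for every `n ≥ 2`, i.e. the circle integral of
`θ · Ψ̂_n` around any sufficiently small circle centered at `y*` is `0`. -/
theorem residue_theta_psi_ge_two
    (f : ℝ) (hf₁ : -1/2 < f) (hf₂ : f < 0) (n : ℕ) (hn : 2 ≤ n)
    (r : ℝ) (hr : 0 < r)
    (hr' : r < min (-f / (1 + f)) (1 - -f / (1 + f))) :
    (∮ y in C(((-f / (1 + f) : ℝ) : ℂ), r),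
        theta (f : ℂ) y * PsiHat (f : ℂ) n y) = 0 := by
  obtain ⟨m, rfl⟩ : ∃ m, n = m + 2 := ⟨n - 2, by omega⟩
  set F : ℂ := (f : ℂ) with hF
  have h1f : (0:ℝ) < 1 + f := by linarith
  have hc : F + 1 ≠ 0 := by
    have : ((f + 1 : ℝ) : ℂ) ≠ 0 := Complex.ofReal_ne_zero.2 (by linarith)
    rw [hF]; push_cast at this ⊢; exact this
  set ρR : ℝ := -f / (1 + f) with hρR
  have hcast : ((ρR : ℝ) : ℂ) = -F / (F + 1) := by
    rw [hρR, hF]; push_cast; ring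
  have hρ0 : 0 < ρR := div_pos (neg_pos.2 hf₂) h1f
  have hρ1 : ρR < 1 := (div_lt_one h1f).2 (by linarith)
  have hr1 : r < ρR := lt_of_lt_of_le hr' (min_le_left _ _)
  have hr2 : r < 1 - ρR := lt_of_lt_of_le hr' (min_le_right _ _)
  -- Laurent data for Ψ̂_m
  obtain ⟨a, hsupp, heq⟩ := psiHat_rep F hc m
  set lo : ℤ := -2 * (m : ℤ) - 2 with hlo
  set ρ : ℂ := -F / (F + 1) with hρ
  -- the coefficients of `y⁻¹ · G₀ = Ψ̂_m · (y+1)/L`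
  have hL_ne : ∀ y : ℂ, y ≠ ρ → F + (F + 1) * y ≠ 0 := fun y hy => by
    rw [L_eq F hc y]
    exact mul_ne_zero hc (sub_ne_zero.2 hy)
  set d : ℤ → ℂ := fun j =>
      0 * a (j - 1) + (F + 1)⁻¹ * a j + ((ρ + 1) * (F + 1)⁻¹) * a (j + 1) with hdd
  have hd_eq : ∀ y : ℂ, y ≠ ρ → y ≠ 0 →
      y⁻¹ * (PsiHat F m y * (y * (y + 1) / (F + (F + 1) * y)))
        = ∑ j ∈ Finset.Icc (lo - 1) (-2), d j * (y - ρ) ^ j := by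
    intro y hy hy0
    have hu : y - ρ ≠ 0 := sub_ne_zero.2 hy
    have hL := hL_ne y hy
    have e0 : y⁻¹ * (PsiHat F m y * (y * (y + 1) / (F + (F + 1) * y)))
        = PsiHat F m y * (0 * (y - ρ) + (F + 1)⁻¹ + ((ρ + 1) * (F + 1)⁻¹) * (y - ρ)⁻¹) := by
      have e1 : (0 : ℂ) * (y - ρ) + (F + 1)⁻¹ + ((ρ + 1) * (F + 1)⁻¹) * (y - ρ)⁻¹
          = (y + 1) / (F + (F + 1) * y) := by
        rw [L_eq F hc y, ← hρ]
        field_simp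
        ring
      rw [e1]
      field_simp
    rw [e0, heq y hy, LP_mul a lo (-2) hsupp _ _ _ hu]
    refine (Finset.sum_subset (Finset.Icc_subset_Icc le_rfl (by omega)) fun x hx hx' => ?_).symm
    have hx1 : x = -1 := by simp at hx hx'; omega
    subst hx1
    simp only [show (-1 : ℤ) + 1 = 0 by norm_num]
    rw [hsupp (-1) (by simp), hsupp 0 (by simp)]
    norm_num
  -- explicit primitive of `y⁻¹ · G₀`
  set H : ℂ → ℂ := fun w =>
      ∑ j ∈ Finset.Icc (lo - 1) (-2), (d j / ((j : ℂ) + 1)) * (w - ρ) ^ (j + 1) with hH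
  have hHderiv : ∀ y : ℂ, y ≠ ρ →
      HasDerivAt H (∑ j ∈ Finset.Icc (lo - 1) (-2), d j * (y - ρ) ^ j) y := by
    intro y hy
    have hu : y - ρ ≠ 0 := sub_ne_zero.2 hy
    refine HasDerivAt.fun_sum fun j hj => ?_
    have hj2 : j ≤ -2 := (Finset.mem_Icc.1 hj).2
    have hj1 : ((j : ℂ) + 1) ≠ 0 := by
      rw [show ((j : ℂ) + 1) = ((j + 1 : ℤ) : ℂ) by push_cast; ring]
      exact_mod_cast (by omega : j + 1 ≠ 0)
    have h1 : HasDerivAt (fun w : ℂ => w - ρ) 1 y := (hasDerivAt_id y).sub_const ρ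
    have h2 := (hasDerivAt_zpow (j + 1) (y - ρ) (Or.inl hu)).comp y h1
    have h3 := h2.const_mul (d j / ((j : ℂ) + 1))
    convert h3 using 1 <;> try rfl
    rw [show (j + 1 - 1 : ℤ) = j from by ring]
    push_cast
    field_simp
  -- pointwise derivative of the primitive on the sphere
  refine circleIntegral.integral_eq_zero_of_hasDerivWithinAt (hr.le)
    (f := fun w => -(theta F w * (PsiHat F (m + 1) w * (w * (w + 1) / (F + (F + 1) * w))))
      - Complex.log w * (PsiHat F m w * (w * (w + 1) / (F + (F + 1) * w))) + H w)
    fun y hy => HasDerivAt.hasDerivWithinAt ?_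
  have hdist : ‖y - ((ρR : ℝ) : ℂ)‖ = r := mem_sphere_iff_norm.1 hy
  have hyne : y ≠ ((ρR : ℝ) : ℂ) := by
    intro h
    rw [h] at hdist
    simp at hdist
    linarith
  have hyρ : y ≠ ρ := by rwa [hcast] at hyne
  have hre : 0 < y.re := by
    have h1 := Complex.abs_re_le_norm (y - ((ρR : ℝ) : ℂ))
    rw [hdist] at h1
    have h2 : (y - ((ρR : ℝ) : ℂ)).re = y.re - ρR := by
      simp [Complex.sub_re, Complex.ofReal_re]
    rw [h2] at h1
    have := (abs_le.1 h1).1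
    linarith
  have hnorm : ‖y‖ < 1 := by
    have h1 : ‖y‖ ≤ ‖y - ((ρR : ℝ) : ℂ)‖ + ‖((ρR : ℝ) : ℂ)‖ := by
      simpa using norm_add_le (y - ((ρR : ℝ) : ℂ)) ((ρR : ℝ) : ℂ)
    rw [hdist] at h1
    have h2 : ‖((ρR : ℝ) : ℂ)‖ = ρR := by
      rw [Complex.norm_real, Real.norm_eq_abs, abs_of_pos hρ0]
    rw [h2] at h1
    linarith
  have hy0 : y ≠ 0 := by
    intro h
    rw [h] at hre
    simp at hre
  have hy1 : y + 1 ≠ 0 := by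
    intro h
    have : (y + 1).re = 0 := by rw [h]; simp
    simp at this
    linarith
  have hL := hL_ne y hyρ
  have hu : y - ρ ≠ 0 := sub_ne_zero.2 hyρ
  have h1 := hasDerivAt_theta F hre hnorm
  have h2 := hasDerivAt_G F hc (m + 1) hyρ
  have h3 := hasDerivAt_G F hc m hyρ
  have h4 := Complex.hasDerivAt_log (Or.inl hre)
  have h5 := hHderiv y hyρ
  have total := (((h1.mul h2).neg).sub (h4.mul h3)).add h5
  have hkey : Complex.log y * (F + (F + 1) * y) / (y * (y + 1))
      * (PsiHat F (m + 1) y * (y * (y + 1) / (F + (F + 1) * y)))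
      = Complex.log y * PsiHat F (m + 1) y := by
    field_simp
  convert total using 1 <;> try rfl
  rw [← hd_eq y hyρ hy0, hkey]
  ring
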